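/- Let C be a finitely complete small category with admissible class M. For each object C, the set Ω_{j_M}(C) of j_M-closed sieves, i.e., sieves S on C such that for every f with codomain C, (∃ m ∈ M/dom f with f∘m ∈ S) ⟺ f ∈ S, is closed under the M-action: if S ∈ Ω_{j_M}(C) and f ∈ M/C, then S·f = {h | f × h ∈ S} ∈ Ω_{j_M}(C). -/
import Mathlib


open CategoryTheory Opposite CategoryTheory.Limits

universe v u

variable {C : Type u} [Category.{v} C] [HasFiniteLimits C]

/-- An admissible class of monomorphisms on a finitely complete category `C`:
contains identities, closed under composition, and stable under pullback. -/
structure AdmissibleClass (C : Type u) [Category.{v} C] [HasFiniteLimits C] where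
  cls : ∀ ⦃Y X : C⦄, (Y ⟶ X) → Prop
  mono : ∀ ⦃Y X : C⦄ (f : Y ⟶ X), cls f → Mono f
  id_mem : ∀ X : C, cls (𝟙 X)
  comp_mem : ∀ ⦃Z Y X : C⦄ (g : Z ⟶ Y) (f : Y ⟶ X), cls g → cls f → cls (g ≫ f)
  pullback_stable : ∀ ⦃A B X : C⦄ (f : A ⟶ X) (m : B ⟶ X), cls m →
    cls (pullback.fst f m)

/-- The diagonal `f × g = f ∘ f⁻¹(g)` of the pullback of `f` and `g` over `X`,
i.e. the product of `f` and `g` in the slice over `X`. -/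
noncomputable def dprod {A B X : C} (f : A ⟶ X) (g : B ⟶ X) : pullback f g ⟶ X :=
  pullback.fst f g ≫ f

/-- The action of an arrow `m : A ⟶ X` on sieves: `S·m = { h | m × h ∈ S }`. -/
noncomputable def sieveAct {X A : C} (S : Sieve X) (m : A ⟶ X) : Sieve X where
  arrows := fun _Y h => S (pullback.fst m h ≫ m)
  downward_closed := by
    intro Y Z h hh g
    have hl : pullback.lift (pullback.fst m (g ≫ h)) (pullback.snd m (g ≫ h) ≫ g)
        (by rw [pullback.condition]; simp) ≫ pullback.fst m h
        = pullback.fst m (g ≫ h) := pullback.lift_fst _ _ _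
    show S (pullback.fst m (g ≫ h) ≫ m)
    rw [← hl, Category.assoc]
    exact S.downward_closed hh _

/-- A sieve `S` on `X` is `j_M`-closed if for every `f` with codomain `X`:
`f ∈ S` iff there exists `m ∈ M/dom f` with `f∘m ∈ S`. -/
def jMClosed (M : AdmissibleClass C) {X : C} (S : Sieve X) : Prop :=
  ∀ ⦃Y : C⦄ (f : Y ⟶ X), (∃ (Z : C) (g : Z ⟶ Y), M.cls g ∧ S (g ≫ f)) ↔ S f

/-- the `j_M`-closed sieves are closed under the `M`-action:
if `S` is `j_M`-closed and `f ∈ M/X` then `S·f` is `j_M`-closed. -/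
theorem jMClosed_sieveAct (M : AdmissibleClass C) (X : C) (S : Sieve X)
    (hS : jMClosed M S) {A : C} (f : A ⟶ X) (hf : M.cls f) :
    jMClosed M (sieveAct S f) := by
  intro Y h
  constructor
  · rintro ⟨Z, g, hg, hgh⟩
    -- hgh : S (pullback.fst f (g ≫ h) ≫ f)
    show S (pullback.fst f h ≫ f)
    refine (hS (pullback.fst f h ≫ f)).mp ?_
    refine ⟨pullback (pullback.snd f h) g, pullback.fst _ _,
      M.pullback_stable _ _ hg, ?_⟩
    let e : pullback (pullback.snd f h) g ⟶ pullback f (g ≫ h) :=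
      pullback.lift (pullback.fst _ _ ≫ pullback.fst f h) (pullback.snd _ _)
        (by rw [Category.assoc, pullback.condition,
              ← Category.assoc, pullback.condition, Category.assoc])
    have he : e ≫ pullback.fst f (g ≫ h) = pullback.fst _ _ ≫ pullback.fst f h :=
      pullback.lift_fst _ _ _
    rw [← Category.assoc, ← he, Category.assoc]
    exact S.downward_closed hgh e
  · intro hh
    refine ⟨Y, 𝟙 Y, M.id_mem Y, ?_⟩
    show S (pullback.fst f (𝟙 Y ≫ h) ≫ f)
    let k : pullback f (𝟙 Y ≫ h) ⟶ pullback f h :=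
      pullback.lift (pullback.fst _ _) (pullback.snd _ _)
        (by rw [pullback.condition]; simp)
    have hk : k ≫ pullback.fst f h = pullback.fst f (𝟙 Y ≫ h) :=
      pullback.lift_fst _ _ _
    rw [← hk, Category.assoc]
    exact S.downward_closed hh k
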